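/- Let α, β ∈ ℝ with α² - β² < 0, and set ρ_{1,2} = -α ± √(α² - β²) ∈ ℂ (so ρ_{1,2} = -α ± i√(β² - α²)). Then there exist positive constants C and R such that for all (τ,ξ) ∈ ℤ × ℤⁿ with |τ| + |ξ| ≥ R one has |τ - |ξ|ρ_1| · |τ - |ξ|ρ_2| ≥ C. In particular the symbol P(τ,ξ) = τ² + 2α τ|ξ| + β²|ξ|² of the operator D_t² - 2αD_t(-Δ_x)^{1/2} + β²Δ_x satisfies |P(τ,ξ)| ≥ C|(τ,ξ)|^{-M} for some C, M > 0 and all large |τ|+|ξ|, so the operator is globally hypoelliptic. -/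

import Mathlib

open scoped BigOperators

/-- Euclidean norm of `ξ ∈ ℤⁿ`. -/
noncomputable def znorm {n : ℕ} (ξ : Fin n → ℤ) : ℝ :=
  Real.sqrt (∑ i, ((ξ i : ℝ)) ^ 2)

/-- Euclidean norm of `(τ, ξ) ∈ ℤ × ℤⁿ`. -/
noncomputable def pairNorm {n : ℕ} (τ : ℤ) (ξ : Fin n → ℤ) : ℝ :=
  Real.sqrt ((τ : ℝ) ^ 2 + ∑ i, ((ξ i : ℝ)) ^ 2)

lemma znorm_nonneg {n : ℕ} (ξ : Fin n → ℤ) : 0 ≤ znorm ξ := Real.sqrt_nonneg _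

lemma znorm_zero_or_one_le {n : ℕ} (ξ : Fin n → ℤ) : znorm ξ = 0 ∨ 1 ≤ znorm ξ := by
  by_cases hz : ∀ i, ξ i = 0
  · left; simp [znorm, hz]
  · right
    push_neg at hz
    obtain ⟨i, hi⟩ := hz
    have h1 : (1 : ℝ) ≤ ((ξ i : ℝ)) ^ 2 := by
      have : (1 : ℤ) ≤ |ξ i| := Int.one_le_abs hi
      have h2 : (1 : ℝ) ≤ |(ξ i : ℝ)| := by exact_mod_cast this
      nlinarith [abs_nonneg ((ξ i : ℝ)), sq_abs ((ξ i : ℝ))]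
    have hsum : (1 : ℝ) ≤ ∑ j, ((ξ j : ℝ)) ^ 2 :=
      le_trans h1 (Finset.single_le_sum (f := fun j => ((ξ j : ℝ)) ^ 2)
        (fun j _ => sq_nonneg _) (Finset.mem_univ i))
    exact Real.one_le_sqrt.mpr hsum

/-- For `α² - β² < 0` and the complex roots `ρ₁,₂ = -α ± i√(β² - α²)`, the product
`|τ - |ξ|ρ₁|·|τ - |ξ|ρ₂|` is bounded below by a positive constant for large `|τ| + |ξ|`;
in particular the symbol `τ² + 2ατ|ξ| + β²|ξ|²` of `D_t² - 2αD_t(-Δ)^{1/2} + β²Δ`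
satisfies the Greenfield–Wallach estimate, so the operator is globally hypoelliptic. -/
theorem wave_type_globally_hypoelliptic {n : ℕ} (α β : ℝ) (h : α ^ 2 - β ^ 2 < 0)
    (ρ₁ ρ₂ : ℂ)
    (hρ₁ : ρ₁ = -(α : ℂ) + Complex.I * (Real.sqrt (β ^ 2 - α ^ 2) : ℝ))
    (hρ₂ : ρ₂ = -(α : ℂ) - Complex.I * (Real.sqrt (β ^ 2 - α ^ 2) : ℝ)) :
    (∃ C R : ℝ, 0 < C ∧ 0 < R ∧ ∀ (τ : ℤ) (ξ : Fin n → ℤ), R ≤ |(τ : ℝ)| + znorm ξ →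
      C ≤ ‖(τ : ℂ) - (znorm ξ : ℝ) * ρ₁‖ *
            ‖(τ : ℂ) - (znorm ξ : ℝ) * ρ₂‖) ∧
    (∃ C M R : ℝ, 0 < C ∧ 0 < M ∧ 0 < R ∧
      ∀ (τ : ℤ) (ξ : Fin n → ℤ), R ≤ |(τ : ℝ)| + znorm ξ →
        C * pairNorm τ ξ ^ (-M) ≤
          ‖(τ : ℂ) ^ 2 + 2 * (α : ℂ) * (τ : ℂ) * (znorm ξ : ℝ) +
            (β : ℂ) ^ 2 * ((znorm ξ : ℝ) : ℂ) ^ 2‖) := by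
  have hba : 0 < β ^ 2 - α ^ 2 := by linarith
  set γ : ℝ := Real.sqrt (β ^ 2 - α ^ 2) with hγ
  have hγpos : 0 < γ := Real.sqrt_pos.mpr hba
  have hγsq : γ ^ 2 = β ^ 2 - α ^ 2 := Real.sq_sqrt hba.le
  -- lower bounds on each factor via imaginary parts
  have habs1 : ∀ (t s : ℝ), 0 ≤ s → s * γ ≤ ‖(t : ℂ) - (s : ℂ) * ρ₁‖ := by
    intro t s hs
    have h1 := Complex.abs_im_le_norm ((t : ℂ) - (s : ℂ) * ρ₁)
    have h2 : ((t : ℂ) - (s : ℂ) * ρ₁).im = -(s * γ) := by rw [hρ₁]; simp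
    rw [h2] at h1
    rwa [abs_neg, abs_of_nonneg (mul_nonneg hs hγpos.le)] at h1
  have habs2 : ∀ (t s : ℝ), 0 ≤ s → s * γ ≤ ‖(t : ℂ) - (s : ℂ) * ρ₂‖ := by
    intro t s hs
    have h1 := Complex.abs_im_le_norm ((t : ℂ) - (s : ℂ) * ρ₂)
    have h2 : ((t : ℂ) - (s : ℂ) * ρ₂).im = s * γ := by rw [hρ₂]; simp
    rw [h2] at h1
    rwa [abs_of_nonneg (mul_nonneg hs hγpos.le)] at h1
  -- the product lower bound
  have key : ∀ (τ : ℤ) (ξ : Fin n → ℤ), (1 : ℝ) ≤ |(τ : ℝ)| + znorm ξ →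
      min (γ * γ) 1 ≤ ‖(τ : ℂ) - (znorm ξ : ℝ) * ρ₁‖ *
        ‖(τ : ℂ) - (znorm ξ : ℝ) * ρ₂‖ := by
    intro τ ξ hR
    rcases znorm_zero_or_one_le ξ with hz | hz
    · -- ξ = 0 : both factors equal |τ| ≥ 1
      have hτ : (1 : ℝ) ≤ |(τ : ℝ)| := by rw [hz] at hR; linarith
      have he : ∀ ρ : ℂ, ‖(τ : ℂ) - (znorm ξ : ℝ) * ρ‖ = |(τ : ℝ)| := by
        intro ρ
        rw [hz]
        simp [Complex.norm_intCast]
      rw [he ρ₁, he ρ₂]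
      calc min (γ * γ) 1 ≤ 1 := min_le_right _ _
        _ ≤ |(τ : ℝ)| * |(τ : ℝ)| := one_le_mul_of_one_le_of_one_le hτ hτ
    · -- |ξ| ≥ 1 : both factors ≥ γ
      have h1 : γ ≤ ‖(τ : ℂ) - (znorm ξ : ℝ) * ρ₁‖ := by
        calc γ = 1 * γ := (one_mul γ).symm
          _ ≤ znorm ξ * γ := by nlinarith
          _ ≤ _ := habs1 _ _ (znorm_nonneg ξ)
      have h2 : γ ≤ ‖(τ : ℂ) - (znorm ξ : ℝ) * ρ₂‖ := by
        calc γ = 1 * γ := (one_mul γ).symm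
          _ ≤ znorm ξ * γ := by nlinarith
          _ ≤ _ := habs2 _ _ (znorm_nonneg ξ)
      calc min (γ * γ) 1 ≤ γ * γ := min_le_left _ _
        _ ≤ _ := mul_le_mul h1 h2 hγpos.le (norm_nonneg _)
  have hCpos : 0 < min (γ * γ) 1 := lt_min (mul_pos hγpos hγpos) one_pos
  constructor
  · exact ⟨min (γ * γ) 1, 1, hCpos, one_pos, key⟩
  · -- second part: the symbol factors
    refine ⟨min (γ * γ) 1, 1, 1, hCpos, one_pos, one_pos, ?_⟩
    intro τ ξ hR
    have hfac : (τ : ℂ) ^ 2 + 2 * (α : ℂ) * (τ : ℂ) * (znorm ξ : ℝ) +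
        (β : ℂ) ^ 2 * ((znorm ξ : ℝ) : ℂ) ^ 2
        = ((τ : ℂ) - (znorm ξ : ℝ) * ρ₁) * ((τ : ℂ) - (znorm ξ : ℝ) * ρ₂) := by
      rw [hρ₁, hρ₂]
      have hg' : ((γ : ℝ) : ℂ) ^ 2 = (β : ℂ) ^ 2 - (α : ℂ) ^ 2 := by exact_mod_cast hγsq
      linear_combination (-(((znorm ξ : ℝ) : ℂ)) ^ 2) * hg' +
        (((znorm ξ : ℝ) : ℂ) ^ 2 * ((γ : ℝ) : ℂ) ^ 2) * Complex.I_sq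
    rw [hfac, norm_mul]
    have hpn : (1 : ℝ) ≤ pairNorm τ ξ := by
      have hs0 : (0 : ℝ) ≤ ∑ i, ((ξ i : ℝ)) ^ 2 := Finset.sum_nonneg fun i _ => sq_nonneg _
      rcases znorm_zero_or_one_le ξ with hz | hz
      · have hτ : (1 : ℝ) ≤ |(τ : ℝ)| := by rw [hz] at hR; linarith
        refine Real.one_le_sqrt.mpr ?_
        nlinarith [abs_nonneg ((τ : ℝ)), sq_abs ((τ : ℝ))]
      · refine Real.one_le_sqrt.mpr ?_
        have hz' : (1 : ℝ) ≤ Real.sqrt (∑ i, ((ξ i : ℝ)) ^ 2) := hz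
        have : (1 : ℝ) ≤ ∑ i, ((ξ i : ℝ)) ^ 2 := Real.one_le_sqrt.mp hz'
        nlinarith [sq_nonneg ((τ : ℝ))]
    have hrp : pairNorm τ ξ ^ (-(1 : ℝ)) ≤ 1 :=
      Real.rpow_le_one_of_one_le_of_nonpos hpn (by norm_num)
    calc min (γ * γ) 1 * pairNorm τ ξ ^ (-(1 : ℝ))
        ≤ min (γ * γ) 1 * 1 := by
          exact mul_le_mul_of_nonneg_left hrp hCpos.le
      _ = min (γ * γ) 1 := mul_one _
      _ ≤ _ := key τ ξ hR
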